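/- Let (X, ≤) be a quasi-order with decidable ≤ and define the multiset embedding: μ₁ ⊑ μ₂ iff there is an injection from the elements of μ₁ (with multiplicity) into those of μ₂ such that each element of μ₁ maps to a ≤-larger element of μ₂. If (X, ≤) is a well-quasi-order (every infinite sequence contains indices i < j with x_i ≤ x_j), then (Multiset X, ⊑) is a well-quasi-order. -/

import Mathlib

/-- A well-quasi-order: every infinite sequence is good. -/
def IsWQO {X : Type*} (le : X → X → Prop) : Prop :=
  ∀ f : ℕ → X, ∃ i j : ℕ, i < j ∧ le (f i) (f j)

/-- Multiset embedding: `μ₁` embeds into `μ₂` iff `μ₁` is pointwise below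
(via `le`) some submultiset of `μ₂`. -/
def MultisetEmb {X : Type*} (le : X → X → Prop) (μ₁ μ₂ : Multiset X) : Prop :=
  ∃ ν : Multiset X, ν ≤ μ₂ ∧ Multiset.Rel le μ₁ ν

theorem multiset_wqo {X : Type*} (le : X → X → Prop) [DecidableRel le]
    (hrefl : ∀ x, le x x)
    (htrans : ∀ x y z, le x y → le y z → le x z)
    (hwqo : IsWQO le) :
    IsWQO (MultisetEmb le) := by
  haveI : IsRefl X le := ⟨hrefl⟩
  haveI : IsTrans X le := ⟨htrans⟩
  haveI : IsPreorder X le := { refl := hrefl, trans := htrans }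
  have hp : (Set.univ : Set X).PartiallyWellOrderedOn le := fun f => hwqo (fun n => (f n).1)
  have hL := hp.partiallyWellOrderedOn_sublistForall₂ (r := le)
  intro f
  obtain ⟨i, j, hij, hrel⟩ := hL (fun n => ⟨(f n).toList, fun x _ => Set.mem_univ x⟩)
  refine ⟨i, j, hij, ?_⟩
  change List.SublistForall₂ le (f i).toList (f j).toList at hrel
  rw [List.sublistForall₂_iff] at hrel
  obtain ⟨l, hforall, hsub⟩ := hrel
  refine ⟨(l : Multiset X), ?_, ?_⟩
  · have h1 : (l : Multiset X) ≤ ((f j).toList : Multiset X) := hsub.subperm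
    rwa [(f j).coe_toList] at h1
  · have key : ∀ l₁ l₂ : List X, List.Forall₂ le l₁ l₂ →
        Multiset.Rel le (l₁ : Multiset X) (l₂ : Multiset X) := by
      intro l₁ l₂ h
      induction h with
      | nil => exact Multiset.Rel.zero
      | cons h _ ih => exact Multiset.Rel.cons h ih
    have h2 := key _ _ hforall
    rwa [(f i).coe_toList] at h2
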